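/- Minimum arc containment gives h-convexity of disks centered on the real axis: the upper half D⁺ = D_r(c) ∩ {Im z ≥ 0} of a closed disk with center c ∈ ℝ and radius r > 0 is h-convex, i.e. for any z₁, z₂ ∈ D⁺, the arc Arc_min(z₁, z₂) of the unique circle through z₁, z₂ centered on ℝ, restricted to Re z₁ ≤ Re z ≤ Re z₂ and Im z ≥ 0, is contained in D⁺. -/

import Mathlib

/-- The minimal arc `Arc_min(z₁,z₂)`: the points of a circle through `z₁` and `z₂`
centered on the real axis with `Re z₁ ≤ Re z ≤ Re z₂` and `Im z ≥ 0`. -/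
def ArcMin (z₁ z₂ : ℂ) : Set ℂ :=
  {z | ∃ x : ℝ, ‖z₁ - x‖ = ‖z₂ - x‖ ∧
        ‖z - x‖ = ‖z₁ - x‖ ∧
        z₁.re ≤ z.re ∧ z.re ≤ z₂.re ∧ 0 ≤ z.im}

/-- The closed upper half of the disk of radius `r` centered at `c ∈ ℝ`. -/
def upperHalfDisk (c r : ℝ) : Set ℂ :=
  {z | ‖z - c‖ ≤ r ∧ 0 ≤ z.im}

lemma sq_abs_shift (w : ℂ) (c x : ℝ) :
    ‖w - c‖^2 = ‖w - x‖^2 + (x - c)*(2*w.re - c - x) := by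
  rw [Complex.sq_norm, Complex.sq_norm, Complex.normSq_apply, Complex.normSq_apply]
  simp [Complex.sub_re, Complex.sub_im, Complex.ofReal_re, Complex.ofReal_im]
  ring

/-- **h-convexity of upper half disks centered on the real axis**: for any
`z₁, z₂` in the upper half disk with `Re z₁ ≤ Re z₂`, the minimal arc
`Arc_min(z₁, z₂)` is contained in the upper half disk. -/
theorem upperHalfDisk_hconvex
    (c r : ℝ) (hr : 0 < r) (z₁ z₂ : ℂ)
    (h₁ : z₁ ∈ upperHalfDisk c r) (h₂ : z₂ ∈ upperHalfDisk c r)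
    (hre : z₁.re ≤ z₂.re) :
    ArcMin z₁ z₂ ⊆ upperHalfDisk c r := by
  rintro z ⟨x, hx12, hzx, hr1, hr2, him⟩
  obtain ⟨ha1, -⟩ := h₁
  obtain ⟨ha2, -⟩ := h₂
  refine ⟨?_, him⟩
  have e1 := sq_abs_shift z₁ c x
  have e2 := sq_abs_shift z₂ c x
  have ez := sq_abs_shift z c x
  have hsq1 : ‖z₁ - c‖^2 ≤ r^2 := by
    have := norm_nonneg (z₁ - c); nlinarith
  have hsq2 : ‖z₂ - c‖^2 ≤ r^2 := by
    have := norm_nonneg (z₂ - c); nlinarith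
  have hzx2 : ‖z - x‖^2 = ‖z₁ - x‖^2 := by rw [hzx]
  have hx122 : ‖z₁ - x‖^2 = ‖z₂ - x‖^2 := by rw [hx12]
  have key : ‖z - c‖^2 ≤ r^2 := by
    rcases le_total c x with h | h
    · nlinarith [mul_le_mul_of_nonneg_left hr2 (sub_nonneg.2 h)]
    · nlinarith [mul_le_mul_of_nonneg_left hr1 (sub_nonneg.2 h)]
  nlinarith [norm_nonneg (z - c)]
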